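/- If for every identical-ordering (IDO) instance there is an allocation and subsidies achieving proportionality with total subsidy at most α, then for every instance (with general additive cost functions, not necessarily IDO) there also exists a proportional-with-subsidy allocation with total subsidy at most α. -/

import Mathlib

open Finset

/-- Reduction from general instances to identical-ordering (IDO) instances for
proportionality with subsidy (chores). An instance is given by additive costs
`c i e ∈ [0,1]`; it is IDO if every agent's costs are non-increasing in the item
index. An allocation `a` with subsidies `s ≥ 0` is PROPS if
`c_i(X_i) - s_i ≤ c_i(M)/n` for all `i`. If every IDO instance admits a PROPS
allocation with total subsidy at most `α`, then so does every instance. -/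
theorem IDO_reduction (n m : ℕ) (hn : 0 < n) (α : ℝ)
    (hIDO : ∀ c : Fin n → Fin m → ℝ,
      (∀ i e, 0 ≤ c i e ∧ c i e ≤ 1) →
      (∀ (i : Fin n) (j k : Fin m), j ≤ k → c i k ≤ c i j) →
      ∃ (a : Fin m → Fin n) (s : Fin n → ℝ),
        (∀ i, 0 ≤ s i) ∧
        (∀ i : Fin n,
          (∑ e ∈ Finset.univ.filter (fun e => a e = i), c i e) - s i ≤ (∑ e, c i e) / n) ∧
        ∑ i, s i ≤ α) :
    ∀ c : Fin n → Fin m → ℝ,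
      (∀ i e, 0 ≤ c i e ∧ c i e ≤ 1) →
      ∃ (a : Fin m → Fin n) (s : Fin n → ℝ),
        (∀ i, 0 ≤ s i) ∧
        (∀ i : Fin n,
          (∑ e ∈ Finset.univ.filter (fun e => a e = i), c i e) - s i ≤ (∑ e, c i e) / n) ∧
        ∑ i, s i ≤ α := by
  intro c hc
  -- sorted (non-increasing) costs
  set σ : Fin n → Equiv.Perm (Fin m) := fun i => Tuple.sort (c i) with hσ
  set c' : Fin n → Fin m → ℝ := fun i k => c i (σ i k.rev) with hc'
  have hmono : ∀ i, Monotone (fun j => c i (σ i j)) := fun i => Tuple.monotone_sort (c i)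
  have hanti : ∀ (i : Fin n) (j k : Fin m), j ≤ k → c' i k ≤ c' i j := by
    intro i j k hjk
    exact hmono i (Fin.rev_le_rev.mpr hjk)
  have hbnd : ∀ i e, 0 ≤ c' i e ∧ c' i e ≤ 1 := fun i e => hc i _
  obtain ⟨a', s, hs0, hprop, hsum⟩ := hIDO c' hbnd hanti
  -- sums agree
  have hsumeq : ∀ i, ∑ e, c' i e = ∑ e, c i e := by
    intro i
    exact Fintype.sum_equiv ((Fin.revPerm).trans (σ i)) _ _ (fun k => rfl)
  -- Hall system
  set t : Fin m → Finset (Fin m) :=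
    fun k => Finset.univ.filter (fun e => c (a' k) e ≤ c' (a' k) k) with ht
  have htcard : ∀ k : Fin m, m - (k : ℕ) ≤ (t k).card := by
    intro k
    have hsub : (Finset.Iic k.rev).image (σ (a' k)) ⊆ t k := by
      intro e he
      obtain ⟨j, hj, rfl⟩ := Finset.mem_image.mp he
      simp only [ht, Finset.mem_filter, Finset.mem_univ, true_and]
      exact hmono (a' k) (Finset.mem_Iic.mp hj)
    calc m - (k : ℕ) = ((k.rev : ℕ) + 1) := by
          rw [Fin.val_rev]; omega
      _ = (Finset.Iic k.rev).card := (Fin.card_Iic _).symm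
      _ = ((Finset.Iic k.rev).image (σ (a' k))).card :=
          (Finset.card_image_of_injective _ (σ (a' k)).injective).symm
      _ ≤ (t k).card := Finset.card_le_card hsub
  have hall : ∀ s' : Finset (Fin m), s'.card ≤ (s'.biUnion t).card := by
    intro s'
    rcases s'.eq_empty_or_nonempty with rfl | hne
    · simp
    · set k0 := s'.min' hne with hk0
      have h1 : s' ⊆ Finset.Ici k0 := fun x hx => Finset.mem_Ici.mpr (s'.min'_le x hx)
      have h2 : s'.card ≤ m - (k0 : ℕ) := by
        calc s'.card ≤ (Finset.Ici k0).card := Finset.card_le_card h1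
          _ = m - (k0 : ℕ) := Fin.card_Ici _
      have h3 : t k0 ⊆ s'.biUnion t :=
        Finset.subset_biUnion_of_mem t (s'.min'_mem hne)
      exact h2.trans ((htcard k0).trans (Finset.card_le_card h3))
  obtain ⟨f, hfinj, hft⟩ := (Finset.all_card_le_biUnion_card_iff_exists_injective t).mp hall
  have hfbij : Function.Bijective f := (Finite.injective_iff_bijective).mp hfinj
  set F : Equiv.Perm (Fin m) := Equiv.ofBijective f hfbij with hF
  refine ⟨fun e => a' (F.symm e), s, hs0, ?_, hsum⟩
  intro i
  have hre : (∑ e ∈ Finset.univ.filter (fun e => a' (F.symm e) = i), c i e)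
      = ∑ k ∈ Finset.univ.filter (fun k => a' k = i), c i (F k) := by
    refine (Finset.sum_bij (fun k _ => F k) ?_ ?_ ?_ ?_).symm
    · intro k hk
      simp only [Finset.mem_filter, Finset.mem_univ, true_and, Equiv.symm_apply_apply]
      exact (Finset.mem_filter.mp hk).2
    · intro k1 _ k2 _ h; exact F.injective h
    · intro e he
      refine ⟨F.symm e, ?_, by simp⟩
      simpa using he
    · intro k _; rfl
  have hkey : (∑ e ∈ Finset.univ.filter (fun e => a' (F.symm e) = i), c i e)
      ≤ ∑ k ∈ Finset.univ.filter (fun k => a' k = i), c' i k := by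
    rw [hre]
    apply Finset.sum_le_sum
    intro k hk
    have hk' : a' k = i := (Finset.mem_filter.mp hk).2
    have hm := (Finset.mem_filter.mp (hft k)).2
    rw [hk'] at hm
    exact hm
  have h2 := hprop i
  rw [hsumeq i] at h2
  calc (∑ e ∈ Finset.univ.filter (fun e => a' (F.symm e) = i), c i e) - s i
      ≤ (∑ k ∈ Finset.univ.filter (fun k => a' k = i), c' i k) - s i := by linarith
    _ ≤ (∑ e, c i e) / n := h2
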